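/- (Telescoping pointwise estimate.) Let n ≥ 1, p ≥ 1, C₀ > 0, let Ω ⊂ ℝⁿ be open, let f ∈ L¹_loc(Ω) and let g : Ω → [0,∞] be measurable. Suppose that for every ball B = B(z,ρ) with B ⊂ Ω one has ⨍_B |f − f_B| dx ≤ C₀ ρ ( ⨍_B g dx )^{1/p}, where f_B = ⨍_B f dx. Then there exists C = C(n,p,C₀) > 0 such that for all Lebesgue points x, y of f with B(x, 2|x−y|) ⊂ Ω and B(y, 2|x−y|) ⊂ Ω, |f(x) − f(y)| ≤ C |x−y| ( (M_{2|x−y|} g(x))^{1/p} + (M_{2|x−y|} g(y))^{1/p} ). -/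

import Mathlib

open MeasureTheory Metric Filter Set
open scoped ENNReal NNReal Topology

noncomputable section

/-- The restricted Hardy–Littlewood maximal function of `g` relative to `Ω`:
`M_R g(x) = sup { ⨍_{B(x,r)} g : 0 < r < R, B(x,r) ⊆ Ω }`. -/
def restMaximal {n : ℕ} (Ω : Set (EuclideanSpace ℝ (Fin n)))
    (g : EuclideanSpace ℝ (Fin n) → ℝ≥0∞) (R : ℝ)
    (x : EuclideanSpace ℝ (Fin n)) : ℝ≥0∞ :=
  ⨆ (r : ℝ) (_ : 0 < r) (_ : r < R) (_ : ball x r ⊆ Ω), ⨍⁻ y in ball x r, g y ∂volume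

/-- `x` is a Lebesgue point of `f`: `⨍_{B(x,r)} |f - f(x)| → 0` as `r → 0⁺`. -/
def IsLebesguePoint {n : ℕ} (f : EuclideanSpace ℝ (Fin n) → ℝ)
    (x : EuclideanSpace ℝ (Fin n)) : Prop :=
  Filter.Tendsto (fun r : ℝ => ⨍ y in ball x r, |f y - f x|)
    (nhdsWithin 0 (Set.Ioi 0)) (nhds 0)

variable {n : ℕ}

lemma vol_ball_toReal (x : EuclideanSpace ℝ (Fin n)) {ρ : ℝ} (hρ : 0 < ρ) :
    (volume (ball x ρ)).toReal
      = ρ ^ n * (volume (ball (0 : EuclideanSpace ℝ (Fin n)) 1)).toReal := by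
  rw [Measure.addHaar_ball_of_pos _ _ hρ, ENNReal.toReal_mul,
    ENNReal.toReal_ofReal (by positivity), finrank_euclideanSpace_fin]

lemma vol_ball_pos (x : EuclideanSpace ℝ (Fin n)) {ρ : ℝ} (hρ : 0 < ρ) :
    0 < (volume (ball x ρ)).toReal :=
  ENNReal.toReal_pos (measure_ball_pos volume x hρ).ne' measure_ball_lt_top.ne

lemma setAverage_nonneg {s : Set (EuclideanSpace ℝ (Fin n))} {h : EuclideanSpace ℝ (Fin n) → ℝ}
    (hh : ∀ w, 0 ≤ h w) : 0 ≤ ⨍ w in s, h w := by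
  rw [setAverage_eq, smul_eq_mul]
  have : 0 ≤ ∫ w in s, h w := integral_nonneg hh
  positivity

/-- average over a subball is controlled by ratio times average over the big ball -/
lemma avg_sub_le {f : EuclideanSpace ℝ (Fin n) → ℝ} {x' z : EuclideanSpace ℝ (Fin n)}
    {ρ' ρ : ℝ} (hρ' : 0 < ρ') (hρ : 0 < ρ)
    (hsub : ball x' ρ' ⊆ ball z ρ) (hf : IntegrableOn f (ball z ρ)) (c : ℝ) :
    |(⨍ w in ball x' ρ', f w) - c| ≤
      ((volume (ball z ρ)).toReal / (volume (ball x' ρ')).toReal) *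
        ⨍ w in ball z ρ, |f w - c| := by
  have hI' : IntegrableOn f (ball x' ρ') := hf.mono_set hsub
  have hvol' := vol_ball_pos x' hρ'
  have hvol := vol_ball_pos z hρ
  have habs : IntegrableOn (fun w => |f w - c|) (ball z ρ) :=
    (hf.sub (integrableOn_const measure_ball_lt_top.ne)).abs
  have h1 : (⨍ w in ball x' ρ', f w) - c = ⨍ w in ball x' ρ', (f w - c) := by
    rw [setAverage_eq, setAverage_eq, integral_sub hI'
      (integrableOn_const measure_ball_lt_top.ne), smul_sub]
    congr 1
    rw [setIntegral_const, smul_smul, inv_mul_cancel₀ (a := volume.real (ball x' ρ')) hvol'.ne', one_smul]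
  rw [h1]
  have hII : ∫ w in ball x' ρ', |f w - c| ≤ ∫ w in ball z ρ, |f w - c| :=
    setIntegral_mono_set habs (Eventually.of_forall fun w => abs_nonneg _)
      (HasSubset.Subset.eventuallyLE hsub)
  calc |⨍ w in ball x' ρ', (f w - c)| ≤ ⨍ w in ball x' ρ', |f w - c| := by
        rw [setAverage_eq, setAverage_eq, smul_eq_mul, smul_eq_mul, abs_mul,
          abs_of_nonneg (inv_nonneg.2 measureReal_nonneg)]
        refine mul_le_mul_of_nonneg_left ?_ (inv_nonneg.2 ENNReal.toReal_nonneg)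
        simpa [Real.norm_eq_abs] using
          norm_integral_le_integral_norm (μ := volume.restrict (ball x' ρ')) (fun w => f w - c)
    _ ≤ _ := by
        rw [setAverage_eq, setAverage_eq, smul_eq_mul, smul_eq_mul]
        calc (volume (ball x' ρ')).toReal⁻¹ * ∫ w in ball x' ρ', |f w - c|
            ≤ (volume (ball x' ρ')).toReal⁻¹ * ∫ w in ball z ρ, |f w - c| := by gcongr
          _ = _ := by simp only [measureReal_def]; field_simp

lemma ratio_two (x : EuclideanSpace ℝ (Fin n)) {ρ : ℝ} (hρ : 0 < ρ) :
    (volume (ball x ρ)).toReal / (volume (ball x (ρ / 2))).toReal = 2 ^ n := by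
  rw [vol_ball_toReal x hρ, vol_ball_toReal x (by linarith), div_pow]
  have hV : 0 < (volume (ball (0 : EuclideanSpace ℝ (Fin n)) 1)).toReal := vol_ball_pos _ one_pos
  field_simp

/-- Telescoping estimate at a Lebesgue point. -/
lemma telescope {f : EuclideanSpace ℝ (Fin n) → ℝ} {x : EuclideanSpace ℝ (Fin n)}
    {ρ₀ K : ℝ} (hρ₀ : 0 < ρ₀) (hK : 0 ≤ K)
    (hLeb : IsLebesguePoint f x) (hf : IntegrableOn f (ball x ρ₀))
    (hP : ∀ ρ : ℝ, 0 < ρ → ρ ≤ ρ₀ →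
      ⨍ w in ball x ρ, |f w - ⨍ v in ball x ρ, f v| ≤ K * ρ) :
    |f x - ⨍ w in ball x ρ₀, f w| ≤ 2 * 2 ^ n * K * ρ₀ := by
  set ρ : ℕ → ℝ := fun i => ρ₀ * (1 / 2) ^ i with hρdef
  have hρpos : ∀ i, 0 < ρ i := fun i => by positivity
  have hρle : ∀ i, ρ i ≤ ρ₀ := fun i => by
    have : (1 / 2 : ℝ) ^ i ≤ 1 := pow_le_one₀ (by norm_num) (by norm_num)
    calc ρ₀ * (1/2)^i ≤ ρ₀ * 1 := by gcongr
      _ = ρ₀ := mul_one _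
  have hρsucc : ∀ i, ρ (i + 1) = ρ i / 2 := fun i => by
    simp only [hρdef, pow_succ]; ring
  set a : ℕ → ℝ := fun i => ⨍ w in ball x (ρ i), f w with hadef
  have hfi : ∀ i, IntegrableOn f (ball x (ρ i)) :=
    fun i => hf.mono_set (ball_subset_ball (hρle i))
  -- step estimate
  have hstep : ∀ i, dist (a i) (a (i + 1)) ≤ (2 ^ n * K * ρ₀) * (1 / 2) ^ i := by
    intro i
    have hsub : ball x (ρ (i + 1)) ⊆ ball x (ρ i) := by
      rw [hρsucc i]; exact ball_subset_ball (by linarith [hρpos i])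
    have h1 := avg_sub_le (hρpos (i+1)) (hρpos i) hsub (hfi i) (a i)
    rw [hρsucc i, ratio_two x (hρpos i)] at h1
    have h2 := hP (ρ i) (hρpos i) (hρle i)
    rw [dist_comm, Real.dist_eq]
    have hai : a (i + 1) = ⨍ w in ball x (ρ i / 2), f w := by
      rw [hadef]; simp only; rw [hρsucc i]
    calc |a (i+1) - a i| ≤ 2 ^ n * ⨍ w in ball x (ρ i), |f w - a i| := by
          rw [hai]; exact h1
      _ ≤ 2 ^ n * (K * ρ i) := mul_le_mul_of_nonneg_left h2 (by positivity)
      _ = (2 ^ n * K * ρ₀) * (1 / 2) ^ i := by rw [hρdef]; ring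
  -- partial sums
  have hsum : ∀ N, dist (a N) (a 0) ≤ 2 * (2 ^ n * K * ρ₀) := by
    intro N
    calc dist (a N) (a 0) = dist (a 0) (a N) := dist_comm _ _
      _ ≤ ∑ i ∈ Finset.range N, dist (a i) (a (i + 1)) := dist_le_range_sum_dist a N
      _ ≤ ∑ i ∈ Finset.range N, (2 ^ n * K * ρ₀) * (1 / 2) ^ i :=
          Finset.sum_le_sum fun i _ => hstep i
      _ = (2 ^ n * K * ρ₀) * ∑ i ∈ Finset.range N, (1 / 2 : ℝ) ^ i := by
          rw [Finset.mul_sum]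
      _ ≤ (2 ^ n * K * ρ₀) * 2 :=
          mul_le_mul_of_nonneg_left (sum_geometric_two_le N) (by positivity)
      _ = 2 * (2 ^ n * K * ρ₀) := by ring
  -- a i → f x
  have hρtend : Tendsto ρ atTop (𝓝[>] 0) := by
    apply tendsto_nhdsWithin_of_tendsto_nhds_of_eventually_within
    · have h0 : Tendsto (fun i : ℕ => ρ₀ * (1 / 2 : ℝ) ^ i) atTop (𝓝 (ρ₀ * 0)) :=
        Tendsto.const_mul ρ₀ (tendsto_pow_atTop_nhds_zero_of_lt_one (by norm_num) (by norm_num))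
      rw [mul_zero] at h0
      exact h0
    · exact Eventually.of_forall fun i => hρpos i
  have hLtend : Tendsto (fun i => ⨍ w in ball x (ρ i), |f w - f x|) atTop (𝓝 0) :=
    hLeb.comp hρtend
  have hatend : Tendsto a atTop (𝓝 (f x)) := by
    rw [tendsto_iff_dist_tendsto_zero]
    refine squeeze_zero (fun i => dist_nonneg) (fun i => ?_) hLtend
    have := avg_sub_le (hρpos i) (hρpos i) (subset_refl _) (hfi i) (f x)
    rw [div_self (vol_ball_pos x (hρpos i)).ne', one_mul] at this
    simpa [Real.dist_eq] using this
  have : Tendsto (fun N => dist (a N) (a 0)) atTop (𝓝 (dist (f x) (a 0))) :=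
    (hatend.dist tendsto_const_nhds)
  have hfin : dist (f x) (a 0) ≤ 2 * (2 ^ n * K * ρ₀) :=
    le_of_tendsto this (Eventually.of_forall hsum)
  have ha0 : a 0 = ⨍ w in ball x ρ₀, f w := by simp [hadef, hρdef]
  rw [← ha0]
  calc |f x - a 0| = dist (f x) (a 0) := (Real.dist_eq _ _).symm
    _ ≤ 2 * (2 ^ n * K * ρ₀) := hfin
    _ = 2 * 2 ^ n * K * ρ₀ := by ring

lemma le_restMaximal {Ω : Set (EuclideanSpace ℝ (Fin n))}
    {g : EuclideanSpace ℝ (Fin n) → ℝ≥0∞} {R ρ : ℝ} {x : EuclideanSpace ℝ (Fin n)}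
    (hρ : 0 < ρ) (hρR : ρ < R) (hsub : ball x ρ ⊆ Ω) :
    ⨍⁻ y in ball x ρ, g y ∂volume ≤ restMaximal Ω g R x :=
  le_iSup_of_le ρ (le_iSup_of_le hρ (le_iSup_of_le hρR (le_iSup_of_le hsub le_rfl)))

lemma ratio_three (x' z : EuclideanSpace ℝ (Fin n)) {ρ : ℝ} (hρ : 0 < ρ) :
    (volume (ball z (3 * ρ))).toReal / (volume (ball x' ρ)).toReal = 3 ^ n := by
  rw [vol_ball_toReal z (by linarith), vol_ball_toReal x' hρ, mul_pow]
  have hV : 0 < (volume (ball (0 : EuclideanSpace ℝ (Fin n)) 1)).toReal := vol_ball_pos _ one_pos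
  field_simp

lemma poin_real {Ω : Set (EuclideanSpace ℝ (Fin n))}
    {f : EuclideanSpace ℝ (Fin n) → ℝ} {g : EuclideanSpace ℝ (Fin n) → ℝ≥0∞}
    {p C₀ : ℝ} (hp : 1 ≤ p) (hC₀ : 0 < C₀)
    (hpoin : ∀ (z : EuclideanSpace ℝ (Fin n)) (ρ : ℝ), 0 < ρ → ball z ρ ⊆ Ω →
      ENNReal.ofReal (⨍ x in ball z ρ, |f x - ⨍ y in ball z ρ, f y|) ≤
        ENNReal.ofReal (C₀ * ρ) * (⨍⁻ y in ball z ρ, g y ∂volume) ^ (1 / p))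
    {z : EuclideanSpace ℝ (Fin n)} {ρ : ℝ} (hρ : 0 < ρ) (hsub : ball z ρ ⊆ Ω)
    {M : ℝ≥0∞} (hM : ⨍⁻ y in ball z ρ, g y ∂volume ≤ M) (hMtop : M ≠ ⊤) :
    ⨍ x in ball z ρ, |f x - ⨍ y in ball z ρ, f y| ≤ (C₀ * (M ^ (1 / p)).toReal) * ρ := by
  have hpinv : (0:ℝ) ≤ 1 / p := by positivity
  have h2 : ENNReal.ofReal (⨍ x in ball z ρ, |f x - ⨍ y in ball z ρ, f y|) ≤
      ENNReal.ofReal (C₀ * ρ) * M ^ (1 / p) :=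
    (hpoin z ρ hρ hsub).trans (mul_le_mul_right (ENNReal.rpow_le_rpow hM hpinv) _)
  have hfin : ENNReal.ofReal (C₀ * ρ) * M ^ (1 / p) ≠ ⊤ :=
    ENNReal.mul_ne_top ENNReal.ofReal_ne_top (ENNReal.rpow_ne_top_of_nonneg hpinv hMtop)
  have h3 := ENNReal.toReal_mono hfin h2
  rw [ENNReal.toReal_ofReal (setAverage_nonneg fun w => abs_nonneg _),
    ENNReal.toReal_mul, ENNReal.toReal_ofReal (by positivity)] at h3
  calc ⨍ x in ball z ρ, |f x - ⨍ y in ball z ρ, f y| ≤ C₀ * ρ * (M ^ (1/p)).toReal := h3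
    _ = (C₀ * (M ^ (1 / p)).toReal) * ρ := by ring

/-- **Telescoping pointwise estimate.** If `f ∈ L¹_loc(Ω)` satisfies the `(1,p)`-Poincaré-type
inequality `⨍_B |f - f_B| ≤ C₀ ρ (⨍_B g)^{1/p}` on all balls `B = B(z,ρ) ⊆ Ω`, then there is
`C = C(n,p,C₀)` with
`|f(x) - f(y)| ≤ C |x-y| ((M_{2|x-y|}g(x))^{1/p} + (M_{2|x-y|}g(y))^{1/p})`
at all Lebesgue points `x, y` of `f` with `B(x,2|x-y|), B(y,2|x-y|) ⊆ Ω`. -/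
theorem telescoping_pointwise_estimate (n : ℕ) (hn : 1 ≤ n) (p C₀ : ℝ)
    (hp : 1 ≤ p) (hC₀ : 0 < C₀) :
    ∃ C : ℝ, 0 < C ∧
      ∀ Ω : Set (EuclideanSpace ℝ (Fin n)), IsOpen Ω →
      ∀ f : EuclideanSpace ℝ (Fin n) → ℝ, LocallyIntegrableOn f Ω →
      ∀ g : EuclideanSpace ℝ (Fin n) → ℝ≥0∞, Measurable g →
        (∀ (z : EuclideanSpace ℝ (Fin n)) (ρ : ℝ), 0 < ρ → ball z ρ ⊆ Ω →
          ENNReal.ofReal (⨍ x in ball z ρ, |f x - ⨍ y in ball z ρ, f y|) ≤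
            ENNReal.ofReal (C₀ * ρ) * (⨍⁻ y in ball z ρ, g y ∂volume) ^ (1 / p)) →
        ∀ x y : EuclideanSpace ℝ (Fin n),
          IsLebesguePoint f x → IsLebesguePoint f y →
          ball x (2 * dist x y) ⊆ Ω → ball y (2 * dist x y) ⊆ Ω →
          ENNReal.ofReal |f x - f y| ≤
            ENNReal.ofReal (C * dist x y) *
              ((restMaximal Ω g (2 * dist x y) x) ^ (1 / p) +
                (restMaximal Ω g (2 * dist x y) y) ^ (1 / p)) := by
  refine ⟨5 * 3 ^ n * C₀, by positivity, ?_⟩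
  intro Ω hΩ f hfloc g hg hpoin x y hLx hLy hBx hBy
  set r : ℝ := dist x y with hrdef
  rcases eq_or_lt_of_le (dist_nonneg : (0:ℝ) ≤ r) with h0 | hr
  · have hxy : x = y := by rw [← dist_eq_zero (x := x) (y := y)]; exact h0.symm
    simp [hxy]
  set Mx := restMaximal Ω g (2 * r) x with hMxdef
  set My := restMaximal Ω g (2 * r) y with hMydef
  have hpinv : (0:ℝ) < 1 / p := by positivity
  have hCr : (0:ℝ) < 5 * 3 ^ n * C₀ * r := by positivity
  -- infinite maximal function cases
  by_cases hMx : Mx = ⊤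
  · rw [hMx, ENNReal.top_rpow_of_pos hpinv, top_add, ENNReal.mul_top
      (by simpa using (ENNReal.ofReal_pos.2 hCr).ne')]
    exact le_top
  by_cases hMy : My = ⊤
  · rw [hMy, ENNReal.top_rpow_of_pos hpinv, add_top, ENNReal.mul_top
      (by simpa using (ENNReal.ofReal_pos.2 hCr).ne')]
    exact le_top
  set Tx := (Mx ^ (1/p)).toReal with hTxdef
  set Ty := (My ^ (1/p)).toReal with hTydef
  have hTx : 0 ≤ Tx := ENNReal.toReal_nonneg
  have hTy : 0 ≤ Ty := ENNReal.toReal_nonneg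
  -- integrability on the two base balls
  have hint : ∀ (z : EuclideanSpace ℝ (Fin n)) (ρ : ℝ), 0 < ρ → ρ < 2 * r →
      ball z (2 * r) ⊆ Ω → IntegrableOn f (ball z ρ) := by
    intro z ρ hρ hρ2 hsub
    have h1 : closedBall z ρ ⊆ Ω := (closedBall_subset_ball hρ2).trans hsub
    exact (hfloc.integrableOn_compact_subset h1 (isCompact_closedBall z ρ)).mono_set
      ball_subset_closedBall
  -- telescoping at x, base radius r/2
  have hx : |f x - ⨍ w in ball x (r/2), f w| ≤ 2 * 2 ^ n * (C₀ * Tx) * (r/2) := by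
    refine telescope (by linarith) (by positivity) hLx
      (hint x (r/2) (by linarith) (by linarith) hBx) ?_
    intro ρ hρ hρle
    have hsubΩ : ball x ρ ⊆ Ω := (ball_subset_ball (by linarith)).trans hBx
    exact poin_real hp hC₀ hpoin hρ hsubΩ
      (le_restMaximal hρ (by linarith) hsubΩ) hMx
  -- telescoping at y, base radius 3*(r/2)
  have hy : |f y - ⨍ w in ball y (3*(r/2)), f w| ≤ 2 * 2 ^ n * (C₀ * Ty) * (3*(r/2)) := by
    refine telescope (by linarith) (by positivity) hLy
      (hint y (3*(r/2)) (by linarith) (by linarith) hBy) ?_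
    intro ρ hρ hρle
    have hsubΩ : ball y ρ ⊆ Ω := (ball_subset_ball (by linarith)).trans hBy
    exact poin_real hp hC₀ hpoin hρ hsubΩ
      (le_restMaximal hρ (by linarith) hsubΩ) hMy
  -- cross term
  have hsubxy : ball x (r/2) ⊆ ball y (3*(r/2)) := by
    intro w hw
    rw [mem_ball] at hw ⊢
    have h := dist_triangle w x y
    have hd : dist x y = r := hrdef.symm
    linarith
  have hcross : |(⨍ w in ball x (r/2), f w) - ⨍ w in ball y (3*(r/2)), f w| ≤
      3 ^ n * ((C₀ * Ty) * (3*(r/2))) := by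
    have h1 := avg_sub_le (by linarith : (0:ℝ) < r/2) (by linarith : (0:ℝ) < 3*(r/2))
      hsubxy (hint y (3*(r/2)) (by linarith) (by linarith) hBy)
      (⨍ w in ball y (3*(r/2)), f w)
    rw [ratio_three x y (by linarith : (0:ℝ) < r/2)] at h1
    refine h1.trans ?_
    have hsubΩ : ball y (3*(r/2)) ⊆ Ω := (ball_subset_ball (by linarith)).trans hBy
    have h2 := poin_real hp hC₀ hpoin (by linarith : (0:ℝ) < 3*(r/2)) hsubΩ
      (le_restMaximal (by linarith) (by linarith) hsubΩ) hMy
    exact mul_le_mul_of_nonneg_left h2 (by positivity)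
  -- combine
  have h23 : (2:ℝ) ^ n ≤ 3 ^ n := pow_le_pow_left₀ (by norm_num) (by norm_num) n
  have h3pos : (0:ℝ) < 3 ^ n := by positivity
  have habs : |f x - f y| ≤ |f x - ⨍ w in ball x (r/2), f w| +
      |(⨍ w in ball x (r/2), f w) - ⨍ w in ball y (3*(r/2)), f w| +
      |f y - ⨍ w in ball y (3*(r/2)), f w| := by
    have t1 := abs_sub_le (f x) (⨍ w in ball x (r/2), f w) (f y)
    have t2 := abs_sub_le (⨍ w in ball x (r/2), f w) (⨍ w in ball y (3*(r/2)), f w) (f y)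
    have t3 : |(⨍ w in ball y (3*(r/2)), f w) - f y| = |f y - ⨍ w in ball y (3*(r/2)), f w| :=
      abs_sub_comm _ _
    linarith
  have hu : (0:ℝ) ≤ C₀ * Tx * r := by positivity
  have hv : (0:ℝ) ≤ C₀ * Ty * r := by positivity
  have q1 : (2:ℝ)^n * (C₀ * Tx * r) ≤ 5 * 3^n * (C₀ * Tx * r) :=
    mul_le_mul_of_nonneg_right (by linarith) hu
  have q2 : ((3:ℝ)/2 * 3^n + 3 * 2^n) * (C₀ * Ty * r) ≤ 5 * 3^n * (C₀ * Ty * r) :=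
    mul_le_mul_of_nonneg_right (by linarith) hv
  have hfinal : |f x - f y| ≤ (5 * 3 ^ n * C₀) * r * (Tx + Ty) := by nlinarith [habs, hx, hy, hcross, q1, q2]
  -- ENNReal conversion
  have hMxt : Mx ^ (1/p) ≠ ⊤ := ENNReal.rpow_ne_top_of_nonneg hpinv.le hMx
  have hMyt : My ^ (1/p) ≠ ⊤ := ENNReal.rpow_ne_top_of_nonneg hpinv.le hMy
  calc ENNReal.ofReal |f x - f y| ≤ ENNReal.ofReal ((5 * 3 ^ n * C₀) * r * (Tx + Ty)) :=
        ENNReal.ofReal_le_ofReal hfinal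
    _ = ENNReal.ofReal ((5 * 3 ^ n * C₀) * r) * (ENNReal.ofReal Tx + ENNReal.ofReal Ty) := by
        rw [ENNReal.ofReal_mul (by positivity), ENNReal.ofReal_add hTx hTy]
    _ = _ := by rw [hTxdef, hTydef, ENNReal.ofReal_toReal hMxt, ENNReal.ofReal_toReal hMyt]

end
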